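/- Let X be a quasi-reflexive real Banach space, let y* ∈ X*, and let (x_n*)_{n=1}^∞ be a bounded sequence in X* such that ⋂_{n=1}^∞ ker(x_n*) ⊆ ker(y*). Then there exist a sequence (z_n*)_{n=1}^∞ enumerating the (countable) set of all finite rational linear combinations of the x_n* that lie in the closed unit ball of X*, and a bounded linear functional F on ℓ∞ (the space of bounded real sequences with the supremum norm), such that for every x ∈ X one has ⟨y*, x⟩ = F((⟨z_n*, x⟩)_{n=1}^∞). -/

import Mathlib

open NormedSpace ENNReal

/-- A real Banach space is quasi-reflexive if the image of the canonical
embedding into the bidual has finite codimension in the bidual. -/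
def IsQuasiReflexiveSpace (X : Type*) [NormedAddCommGroup X] [NormedSpace ℝ X] : Prop :=
  FiniteDimensional ℝ
    (StrongDual ℝ (StrongDual ℝ X) ⧸ LinearMap.range (inclusionInDoubleDual ℝ X : X →ₗ[ℝ] StrongDual ℝ (StrongDual ℝ X)))

open Metric Set


/-- If `R` is a closed subspace and `G` a finite-dimensional subspace meeting `R` only at `0`,
then `‖w + g‖` dominates a multiple of `‖w‖` for `w ∈ R`, `g ∈ G`. -/
lemma aux_sep {E : Type*} [NormedAddCommGroup E] [NormedSpace ℝ E]
    (R G : Submodule ℝ E) (hR : IsClosed (R : Set E)) [FiniteDimensional ℝ G]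
    (hRG : ∀ v, v ∈ R → v ∈ G → v = 0) :
    ∃ c : ℝ, 0 < c ∧ ∀ w ∈ R, ∀ g ∈ G, c * ‖w‖ ≤ ‖w + g‖ := by
  by_cases hG : ∀ g : G, g = 0
  · refine ⟨1, one_pos, fun w hw g hg => ?_⟩
    have : g = 0 := by simpa using congrArg Subtype.val (hG ⟨g, hg⟩)
    simp [this]
  · push_neg at hG
    obtain ⟨g₀, hg₀⟩ := hG
    -- the unit sphere of G, as a compact subset of E
    have hKco : IsCompact (Subtype.val '' (sphere (0 : G) 1)) :=
      (isCompact_sphere (0 : G) 1).image continuous_subtype_val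
    have hKne : (Subtype.val '' (sphere (0 : G) 1)).Nonempty := by
      refine ⟨(‖g₀‖⁻¹ • g₀ : G), ⟨‖g₀‖⁻¹ • g₀, ?_, rfl⟩⟩
      have : ‖(g₀ : E)‖ ≠ 0 := by
        simpa [Submodule.coe_norm] using fun h => hg₀ (by ext; simpa [norm_eq_zero] using h)
      simp [mem_sphere_iff_norm, norm_smul, Submodule.coe_norm, inv_mul_cancel₀ this]
    obtain ⟨v₀, hv₀K, hv₀min⟩ := hKco.exists_isMinOn hKne
      ((continuous_infDist_pt (R : Set E)).continuousOn)
    set δ := infDist v₀ (R : Set E) with hδdef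
    have hv₀G : v₀ ∈ G := by
      obtain ⟨u, _, rfl⟩ := hv₀K; exact u.2
    have hv₀n : ‖v₀‖ = 1 := by
      obtain ⟨u, hu, rfl⟩ := hv₀K
      simpa [mem_sphere_iff_norm, Submodule.coe_norm] using hu
    have hδpos : 0 < δ := by
      rw [hδdef]
      refine (hR.notMem_iff_infDist_pos ⟨0, R.zero_mem⟩).1 ?_
      intro hmem
      have : v₀ = 0 := hRG v₀ hmem hv₀G
      simp [this] at hv₀n
    refine ⟨δ / (1 + δ), by positivity, fun w hw g hg => ?_⟩
    by_cases hgz : g = 0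
    · subst hgz
      simp only [add_zero]
      have h1 : δ / (1 + δ) ≤ 1 := by
        rw [div_le_one (by positivity)]; linarith
      nlinarith [norm_nonneg w]
    · have hgn : (0:ℝ) < ‖g‖ := norm_pos_iff.2 hgz
      -- the normalized g is on the sphere of G
      have hmemK : ‖g‖⁻¹ • g ∈ Subtype.val '' (sphere (0 : G) 1) := by
        refine ⟨⟨‖g‖⁻¹ • g, G.smul_mem _ hg⟩, ?_, rfl⟩
        simp [mem_sphere_iff_norm, Submodule.coe_norm, norm_smul, inv_mul_cancel₀ hgn.ne']
      have hmin := hv₀min hmemK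
      have hRin : -(‖g‖⁻¹ • w) ∈ (R : Set E) := R.neg_mem (R.smul_mem _ hw)
      have hdist : infDist (‖g‖⁻¹ • g) (R : Set E) ≤ ‖g‖⁻¹ * ‖w + g‖ := by
        calc infDist (‖g‖⁻¹ • g) (R : Set E) ≤ dist (‖g‖⁻¹ • g) (-(‖g‖⁻¹ • w)) :=
              infDist_le_dist_of_mem hRin
          _ = ‖‖g‖⁻¹ • g + ‖g‖⁻¹ • w‖ := by
              rw [dist_eq_norm, sub_neg_eq_add]
          _ = ‖g‖⁻¹ * ‖w + g‖ := by
              rw [← smul_add, norm_smul]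
              simp [abs_of_nonneg (inv_nonneg.2 hgn.le), add_comm]
      have hδle : δ ≤ ‖g‖⁻¹ * ‖w + g‖ := le_trans hmin hdist
      have h1 : ‖g‖ * δ ≤ ‖w + g‖ := by
        calc ‖g‖ * δ ≤ ‖g‖ * (‖g‖⁻¹ * ‖w + g‖) :=
              mul_le_mul_of_nonneg_left hδle hgn.le
          _ = ‖w + g‖ := by field_simp
      have hgle : ‖g‖ ≤ δ⁻¹ * ‖w + g‖ := by
        rw [inv_mul_eq_div, le_div_iff₀ hδpos]; linarith
      have hwle : ‖w‖ ≤ (1 + δ⁻¹) * ‖w + g‖ := by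
        have : ‖w‖ ≤ ‖w + g‖ + ‖g‖ := by
          have hwg : w = w + g + -g := by abel
          calc ‖w‖ = ‖w + g + -g‖ := by rw [← hwg]
            _ ≤ ‖w + g‖ + ‖-g‖ := norm_add_le _ _
            _ = ‖w + g‖ + ‖g‖ := by rw [norm_neg]
        nlinarith [norm_nonneg (w+g)]
      rw [div_mul_eq_mul_div, div_le_iff₀ (by positivity : (0:ℝ) < 1 + δ)]
      calc δ * ‖w‖ ≤ δ * ((1 + δ⁻¹) * ‖w + g‖) := by nlinarith
        _ = (δ + 1) * ‖w + g‖ := by field_simp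
        _ = ‖w + g‖ * (1 + δ) := by ring

open Set

/-- The real span of a set is contained in the closure of its rational span. -/
lemma span_rat_dense {E : Type*} [NormedAddCommGroup E] [NormedSpace ℝ E] [Module ℚ E]
    (s : Set E) :
    (Submodule.span ℝ s : Set E) ⊆ closure (Submodule.span ℚ s : Set E) := by
  set D : Set E := (Submodule.span ℚ s : Set E)
  have hq : ∀ (q : ℚ) (w : E), w ∈ closure D → (q : ℝ) • w ∈ closure D := by
    intro q w hw
    have hc : Continuous fun v : E => (q : ℝ) • v := continuous_const_smul _
    refine map_mem_closure hc hw ?_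
    intro v hv
    have : (q : ℝ) • v = q • v := ratCast_smul_eq ℝ ℚ q v
    rw [this]
    exact Submodule.smul_mem _ q hv
  have hadd : ∀ a ∈ closure D, ∀ b ∈ closure D, a + b ∈ closure D := by
    intro a ha b hb
    have h := (Submodule.span ℚ s).toAddSubgroup.topologicalClosure.add_mem
      (x := a) (y := b) (by simpa [AddSubgroup.topologicalClosure] using ha)
      (by simpa [AddSubgroup.topologicalClosure] using hb)
    simpa [AddSubgroup.topologicalClosure] using h
  have hsmul : ∀ (r : ℝ), ∀ w ∈ closure D, r • w ∈ closure D := by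
    intro r w hw
    have hr : r ∈ closure (Set.range ((↑) : ℚ → ℝ)) := by
      rw [Rat.denseRange_cast.closure_eq]; trivial
    rw [mem_closure_iff_seq_limit] at hr
    obtain ⟨u, hu_mem, hu⟩ := hr
    choose q hqu using hu_mem
    have htend : Filter.Tendsto (fun k => u k • w) Filter.atTop (nhds (r • w)) :=
      hu.smul_const w
    refine isClosed_closure.mem_of_tendsto htend (Filter.Eventually.of_forall fun k => ?_)
    rw [← hqu k]
    exact hq (q k) w hw
  set K : Submodule ℝ E :=
    { carrier := closure D
      zero_mem' := subset_closure (Submodule.zero_mem (Submodule.span ℚ s))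
      add_mem' := fun ha hb => hadd _ ha _ hb
      smul_mem' := fun r w hw => hsmul r w hw }
  have : Submodule.span ℝ s ≤ K :=
    Submodule.span_le.2 fun v hv => subset_closure (Submodule.subset_span hv)
  exact fun v hv => this hv

set_option maxHeartbeats 4000000 in
set_option synthInstance.maxHeartbeats 400000 in
/-- Let `X` be a quasi-reflexive real Banach space, `y* ∈ X*`, and
`(xₙ*)` a bounded sequence in `X*` with `⋂ₙ ker xₙ* ⊆ ker y*`.  Then there are
an enumeration `(zₙ*)` of the set of finite rational linear combinations of
the `xₙ*` lying in the closed unit ball of `X*`, and a bounded linear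
functional `F` on `ℓ∞` such that `⟨y*, x⟩ = F((⟨zₙ*, x⟩)ₙ)` for every `x ∈ X`. -/
theorem quasiReflexive_generalized_combination
    (X : Type*) [NormedAddCommGroup X] [NormedSpace ℝ X] [CompleteSpace X]
    (hqr : IsQuasiReflexiveSpace X)
    (y : StrongDual ℝ X) (x : ℕ → StrongDual ℝ X)
    (hbdd : ∃ C : ℝ, ∀ n, ‖x n‖ ≤ C)
    (hker : (⋂ n, LinearMap.ker (x n : X →ₗ[ℝ] ℝ) : Set X) ⊆ (LinearMap.ker (y : X →ₗ[ℝ] ℝ) : Set X)) :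
    ∃ z : ℕ → StrongDual ℝ X,
      Set.range z =
        (Submodule.span ℚ (Set.range x) : Set (StrongDual ℝ X)) ∩ Metric.closedBall 0 1 ∧
      ∃ F : lp (fun _ : ℕ => ℝ) ∞ →L[ℝ] ℝ,
        ∀ ξ : X, ∃ h : Memℓp (fun n => z n ξ) ∞,
          y ξ = F ⟨fun n => z n ξ, h⟩ := by
  classical
  -- the countable set S of rational combinations in the unit ball
  set S : Set (StrongDual ℝ X) :=
    (Submodule.span ℚ (Set.range x) : Set (StrongDual ℝ X)) ∩ Metric.closedBall 0 1 with hSdef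
  have hScnt : S.Countable := by
    have : Countable (Submodule.span ℚ (Set.range x)) := inferInstance
    exact (Set.countable_coe_iff.mp this).mono Set.inter_subset_left
  have hSne : S.Nonempty :=
    ⟨0, Submodule.zero_mem _, Metric.mem_closedBall_self zero_le_one⟩
  obtain ⟨z, hz⟩ := hScnt.exists_eq_range hSne
  refine ⟨z, hz.symm, ?_⟩
  have hzS : ∀ n, z n ∈ S := fun n => by rw [hz]; exact ⟨n, rfl⟩
  have hz1 : ∀ n, ‖z n‖ ≤ 1 := fun n => by
    have := (hzS n).2
    rwa [Metric.mem_closedBall, dist_zero_right] at this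
  -- the sequence (z n ξ) is bounded
  have hmem : ∀ ξ : X, Memℓp (fun n => z n ξ) ∞ := by
    intro ξ
    apply memℓp_infty
    refine ⟨‖ξ‖, ?_⟩
    rintro - ⟨n, rfl⟩
    calc ‖z n ξ‖ ≤ ‖z n‖ * ‖ξ‖ := (z n).le_opNorm ξ
      _ ≤ 1 * ‖ξ‖ := by nlinarith [norm_nonneg ξ, hz1 n]
      _ = ‖ξ‖ := one_mul _
  -- the bounded linear operator T : X → ℓ∞
  set T : X →ₗ[ℝ] lp (fun _ : ℕ => ℝ) ∞ :=
    { toFun := fun ξ => ⟨fun n => z n ξ, hmem ξ⟩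
      map_add' := by intro a b; apply Subtype.ext; funext n; exact map_add (z n) a b
      map_smul' := by intro r a; apply Subtype.ext; funext n; exact map_smul (z n) r a } with hTdef
  have hTapply : ∀ (ξ : X) (n : ℕ), (T ξ : ∀ _ : ℕ, ℝ) n = z n ξ := fun ξ n => rfl
  have hzT : ∀ (ξ : X) (n : ℕ), ‖z n ξ‖ ≤ ‖T ξ‖ := by
    intro ξ n
    have h := lp.norm_apply_le_norm (E := fun _ : ℕ => ℝ) ENNReal.top_ne_zero (T ξ) n
    rwa [hTapply] at h
  -- all elements of the rational span satisfy |w ξ| ≤ ‖T ξ‖ * ‖w‖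
  have hspanQ : ∀ ξ : X, ∀ w ∈ Submodule.span ℚ (Set.range x), ‖w ξ‖ ≤ ‖T ξ‖ * ‖w‖ := by
    intro ξ w hw
    rcases eq_or_ne w 0 with rfl | hw0
    · simp
    have hnw : 0 < ‖w‖ := norm_pos_iff.2 hw0
    have hP : (0:ℝ) ≤ ‖T ξ‖ := norm_nonneg _
    refine le_of_forall_pos_le_add fun ε hε => ?_
    have hden : 0 < ‖T ξ‖ * ‖w‖ + ε := by positivity
    have hlt : max (‖T ξ‖ / (‖T ξ‖ * ‖w‖ + ε)) 0 < 1 / ‖w‖ := by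
      rcases eq_or_lt_of_le hP with hP0 | hP0
      · rw [← hP0]
        simp only [zero_div, max_self]
        positivity
      · apply max_lt
        · rw [div_lt_div_iff₀ hden hnw]
          nlinarith
        · positivity
    obtain ⟨q, hq1, hq2⟩ := exists_rat_btwn hlt
    have hq0 : (0:ℝ) < (q:ℝ) := lt_of_le_of_lt (le_max_right _ 0) hq1
    have hcast : ((q:ℝ)) • w = q • w := by
      rw [ratCast_smul_eq ℝ ℚ q w, Rat.cast_id]
    have hqw : q • w ∈ S := by
      refine ⟨Submodule.smul_mem _ q hw, ?_⟩
      rw [Metric.mem_closedBall, dist_zero_right, ← hcast, norm_smul]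
      have : (q:ℝ) * ‖w‖ < 1 := by
        rw [← lt_div_iff₀ hnw]
        simpa [one_div] using hq2
      calc ‖(q:ℝ)‖ * ‖w‖ = (q:ℝ) * ‖w‖ := by rw [Real.norm_eq_abs, abs_of_pos hq0]
        _ ≤ 1 := this.le
    rw [hz] at hqw
    obtain ⟨n, hn⟩ := hqw
    have hle : ‖(q:ℝ) * w ξ‖ ≤ ‖T ξ‖ := by
      have h1 := hzT ξ n
      rw [hn, ← hcast] at h1
      simpa using h1
    rw [norm_mul, Real.norm_eq_abs (q:ℝ), abs_of_pos hq0] at hle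
    have hPq : ‖T ξ‖ < (q:ℝ) * (‖T ξ‖ * ‖w‖ + ε) := by
      have := lt_of_le_of_lt (le_max_left (‖T ξ‖ / (‖T ξ‖ * ‖w‖ + ε)) 0) hq1
      rw [div_lt_iff₀ hden] at this
      linarith
    nlinarith [norm_nonneg (w ξ)]
  -- hence so do all elements of the closed real span M
  set M : Submodule ℝ (StrongDual ℝ X) :=
    (Submodule.span ℝ (Set.range x)).topologicalClosure with hMdef
  have hMbound : ∀ ξ : X, ∀ w ∈ M, ‖w ξ‖ ≤ ‖T ξ‖ * ‖w‖ := by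
    intro ξ w hw
    have hcont : Continuous fun u : StrongDual ℝ X => u ξ := by
      have he : (fun u : StrongDual ℝ X => u ξ) = ⇑(inclusionInDoubleDual ℝ X ξ) := by
        funext u; rw [NormedSpace.dual_def]
      rw [he]; exact (inclusionInDoubleDual ℝ X ξ).continuous
    have hclosed : IsClosed {u : StrongDual ℝ X | ‖u ξ‖ ≤ ‖T ξ‖ * ‖u‖} :=
      isClosed_le hcont.norm (continuous_const.mul continuous_norm)
    have hsub : (M : Set (StrongDual ℝ X)) ⊆ {u : StrongDual ℝ X | ‖u ξ‖ ≤ ‖T ξ‖ * ‖u‖} := by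
      rw [hMdef, Submodule.topologicalClosure_coe]
      refine closure_minimal (fun u hu => ?_) hclosed
      exact closure_minimal (fun v hv => hspanQ ξ v hv) hclosed (span_rat_dense _ hu)
    exact hsub hw
  -- Step A : for every ξ there is Φ annihilating all x n with ‖Jξ - Φ‖ ≤ ‖T ξ‖
  have stepA : ∀ ξ : X, ∃ Φ : StrongDual ℝ (StrongDual ℝ X), (∀ n, Φ (x n) = 0) ∧
      ‖inclusionInDoubleDual ℝ X ξ - Φ‖ ≤ ‖T ξ‖ := by
    intro ξ
    set f : StrongDual ℝ M := (inclusionInDoubleDual ℝ X ξ).comp M.subtypeL with hfdef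
    have hfnorm : @norm _ (ContinuousLinearMap.hasOpNorm (𝕜 := ℝ) (E := M)) f ≤ ‖T ξ‖ := by
      refine ContinuousLinearMap.opNorm_le_bound _ (norm_nonneg _) fun v => ?_
      have hfv : f v = (v : StrongDual ℝ X) ξ := by
        rw [hfdef, ContinuousLinearMap.comp_apply, NormedSpace.dual_def]; rfl
      rw [hfv]
      exact hMbound ξ (v : StrongDual ℝ X) v.2
    obtain ⟨Ψ, hΨext, hΨnorm⟩ := exists_extension_norm_eq M f
    refine ⟨inclusionInDoubleDual ℝ X ξ - Ψ, fun n => ?_, ?_⟩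
    · have hxM : x n ∈ M :=
        Submodule.le_topologicalClosure _ (Submodule.subset_span ⟨n, rfl⟩)
      have hΨx : Ψ (x n) = x n ξ := by
        have h1 := hΨext ⟨x n, hxM⟩
        rw [hfdef, ContinuousLinearMap.comp_apply, NormedSpace.dual_def] at h1
        exact h1
      rw [ContinuousLinearMap.sub_apply, NormedSpace.dual_def, hΨx, sub_self]
    · have hcancel : inclusionInDoubleDual ℝ X ξ - (inclusionInDoubleDual ℝ X ξ - Ψ) = Ψ := by
        abel
      rw [hcancel, hΨnorm]
      exact hfnorm
  -- the key global bound via quasi-reflexivity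
  obtain ⟨C, hC⟩ : ∃ C : ℝ, ∀ ξ : X, ‖y ξ‖ ≤ C * ‖T ξ‖ := by
    set J := inclusionInDoubleDual ℝ X with hJdef
    set R := LinearMap.range (J : X →ₗ[ℝ] StrongDual ℝ (StrongDual ℝ X)) with hRdef
    have hnormJ : ∀ v : X, ‖J v‖ = ‖v‖ := fun v =>
      (inclusionInDoubleDualLi ℝ (E := X)).norm_map v
    have hRclosed : IsClosed (R : Set (StrongDual ℝ (StrongDual ℝ X))) := by
      have h1 : (R : Set (StrongDual ℝ (StrongDual ℝ X))) =
          Set.range ⇑(inclusionInDoubleDualLi ℝ (E := X)) := by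
        rw [hRdef, LinearMap.coe_range]
        rfl
      rw [h1]
      have hiso : Isometry ⇑(inclusionInDoubleDualLi ℝ (E := X)) :=
        (inclusionInDoubleDualLi ℝ (E := X)).isometry
      exact hiso.isClosedEmbedding.isClosed_range
    set A : Submodule ℝ (StrongDual ℝ (StrongDual ℝ X)) :=
      ⨅ n, LinearMap.ker (inclusionInDoubleDual ℝ (StrongDual ℝ X) (x n) : StrongDual ℝ (StrongDual ℝ X) →ₗ[ℝ] ℝ) with hAdef
    have hAmem : ∀ Φ : StrongDual ℝ (StrongDual ℝ X), Φ ∈ A ↔ ∀ n, Φ (x n) = 0 := by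
      intro Φ
      simp [hAdef, Submodule.mem_iInf, LinearMap.mem_ker, NormedSpace.dual_def]
    haveI hfd : FiniteDimensional ℝ (StrongDual ℝ (StrongDual ℝ X) ⧸ R) := hqr
    set A' : Submodule ℝ (StrongDual ℝ (StrongDual ℝ X) ⧸ R) := A.map R.mkQ with hA'def
    haveI : FiniteDimensional ℝ A' := inferInstance
    set m := Module.finrank ℝ A' with hmdef
    set b : Module.Basis (Fin m) ℝ A' := Module.finBasis ℝ A' with hbdef
    have hlift : ∀ i : Fin m, ∃ Φ, Φ ∈ A ∧ R.mkQ Φ = ((b i : A') : StrongDual ℝ (StrongDual ℝ X) ⧸ R) := by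
      intro i
      obtain ⟨Φ, hΦ, heq⟩ := Submodule.mem_map.mp (b i).2
      exact ⟨Φ, hΦ, heq⟩
    choose φ hφA hφπ using hlift
    set G : type_of% R := Submodule.span ℝ (Set.range φ) with hGdef
    haveI : FiniteDimensional ℝ G := FiniteDimensional.span_of_finite ℝ (Set.finite_range φ)
    have hGA : G ≤ A := Submodule.span_le.2 (by rintro - ⟨i, rfl⟩; exact hφA i)
    have hcoesum : ∀ c : Fin m → ℝ,
        ((∑ i, c i • b i : A') : StrongDual ℝ (StrongDual ℝ X) ⧸ R) = ∑ i, c i • ((b i : A') : StrongDual ℝ (StrongDual ℝ X) ⧸ R) := by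
      intro c
      rw [show ((∑ i, c i • b i : A') : StrongDual ℝ (StrongDual ℝ X) ⧸ R) = A'.subtype (∑ i, c i • b i) from rfl,
        map_sum]
      simp
    have hRG : ∀ v, v ∈ R → v ∈ G → v = 0 := by
      intro v hvR hvG
      rw [hGdef] at hvG
      obtain ⟨c, hc⟩ := (Submodule.mem_span_range_iff_exists_fun ℝ).mp hvG
      have h0 : R.mkQ v = 0 := by
        rw [Submodule.mkQ_apply, Submodule.Quotient.mk_eq_zero]
        exact hvR
      have h1 : ∑ i, c i • ((b i : A') : StrongDual ℝ (StrongDual ℝ X) ⧸ R) = 0 := by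
        rw [← h0, ← hc, map_sum]
        simp [hφπ]
      have h2 : (∑ i, c i • b i : A') = 0 := by
        have := (hcoesum c).trans h1
        exact_mod_cast Subtype.ext this
      have h3 : ∀ i, c i = 0 :=
        Fintype.linearIndependent_iff.mp b.linearIndependent c h2
      rw [← hc]
      simp [h3]
    have hdecomp : ∀ Φ, Φ ∈ A → ∃ g, g ∈ G ∧ Φ - g ∈ R := by
      intro Φ hΦ
      have hΦ' : R.mkQ Φ ∈ A' := Submodule.mem_map_of_mem hΦ
      set a : A' := ⟨R.mkQ Φ, hΦ'⟩ with hadef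
      set c := b.repr a with hcdef
      refine ⟨∑ i, c i • φ i,
        Submodule.sum_mem _ fun i _ =>
          Submodule.smul_mem _ _ (Submodule.subset_span ⟨i, rfl⟩), ?_⟩
      have hmk : R.mkQ (Φ - ∑ i, c i • φ i) = 0 := by
        rw [map_sub, map_sum]
        have h4 : ∑ i, R.mkQ (c i • φ i) = ∑ i, c i • ((b i : A') : StrongDual ℝ (StrongDual ℝ X) ⧸ R) := by
          refine Finset.sum_congr rfl fun i _ => ?_
          rw [map_smul, hφπ]
        rw [h4, ← hcoesum c]
        have h5 : (∑ i, c i • b i : A') = a := b.sum_repr a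
        rw [h5]
        show R.mkQ Φ - (a : StrongDual ℝ (StrongDual ℝ X) ⧸ R) = 0
        rw [hadef]
        simp
      rw [Submodule.mkQ_apply, Submodule.Quotient.mk_eq_zero] at hmk
      exact hmk
    obtain ⟨c0, hc0pos, hc0⟩ := aux_sep (E := StrongDual ℝ (StrongDual ℝ X)) R G hRclosed hRG
    refine ⟨‖y‖ / c0, fun ξ => ?_⟩
    obtain ⟨Φ, hΦ0, hΦnear⟩ := stepA ξ
    obtain ⟨g, hgG, hgR⟩ := hdecomp Φ ((hAmem Φ).2 hΦ0)
    obtain ⟨η, hη⟩ := LinearMap.mem_range.mp hgR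
    have hηJ : J η = Φ - g := hη
    have hηN : ∀ n, x n η = 0 := by
      intro n
      have hg0 : g (x n) = 0 := (hAmem g).1 (hGA hgG) n
      have h1 : (Φ - g) (x n) = 0 := by
        rw [ContinuousLinearMap.sub_apply, hΦ0 n, hg0, sub_self]
      have h2 : J η (x n) = x n η := NormedSpace.dual_def ℝ X η (x n)
      rw [hηJ, h1] at h2
      exact h2.symm
    have hyη : y η = 0 := by
      have : η ∈ (⋂ n, (LinearMap.ker (x n : X →ₗ[ℝ] ℝ) : Set X)) :=
        Set.mem_iInter.2 fun n => LinearMap.mem_ker.2 (hηN n)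
      exact LinearMap.mem_ker.1 (hker this)
    have hkey : c0 * ‖ξ - η‖ ≤ ‖T ξ‖ := by
      have h3 := hc0 (J (ξ - η)) (LinearMap.mem_range.2 ⟨ξ - η, rfl⟩) (-g) (G.neg_mem hgG)
      have h4 : J (ξ - η) + -g = J ξ - Φ := by
        rw [map_sub, hηJ]
        abel
      rw [h4, hnormJ] at h3
      exact le_trans h3 hΦnear
    have h5 : ‖y ξ‖ = ‖y (ξ - η)‖ := by rw [map_sub, hyη, sub_zero]
    have h6 : ‖ξ - η‖ ≤ ‖T ξ‖ / c0 := by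
      rw [le_div_iff₀ hc0pos]
      linarith [hkey]
    calc ‖y ξ‖ = ‖y (ξ - η)‖ := h5
      _ ≤ ‖y‖ * ‖ξ - η‖ := y.le_opNorm _
      _ ≤ ‖y‖ * (‖T ξ‖ / c0) := mul_le_mul_of_nonneg_left h6 (norm_nonneg y)
      _ = ‖y‖ / c0 * ‖T ξ‖ := by ring
  -- construct F by Hahn-Banach
  have hkerT : LinearMap.ker T ≤ LinearMap.ker (y : X →ₗ[ℝ] ℝ) := by
    intro ξ hξ
    rw [LinearMap.mem_ker] at hξ ⊢
    have h0 : ‖T ξ‖ = 0 := by rw [hξ, norm_zero]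
    have := hC ξ
    rw [h0, mul_zero] at this
    simpa [norm_le_zero_iff] using this
  set ψ : LinearMap.range T →ₗ[ℝ] ℝ :=
    ((LinearMap.ker T).liftQ (y : X →ₗ[ℝ] ℝ) hkerT).comp
      (T.quotKerEquivRange.symm : LinearMap.range T →ₗ[ℝ] X ⧸ LinearMap.ker T) with hψdef
  have hψT : ∀ ξ : X, ψ ⟨T ξ, LinearMap.mem_range_self T ξ⟩ = y ξ := by
    intro ξ
    have h1 : T.quotKerEquivRange (Submodule.Quotient.mk ξ) = ⟨T ξ, LinearMap.mem_range_self T ξ⟩ := by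
      apply Subtype.ext
      exact T.quotKerEquivRange_apply_mk ξ
    have h2 : (T.quotKerEquivRange.symm ⟨T ξ, LinearMap.mem_range_self T ξ⟩ : X ⧸ LinearMap.ker T)
        = Submodule.Quotient.mk ξ := by
      rw [← h1, LinearEquiv.symm_apply_apply]
    simp only [hψdef, LinearMap.comp_apply, LinearEquiv.coe_coe, h2]
    exact Submodule.liftQ_apply _ _ _
  have hψbound : ∀ v : LinearMap.range T, ‖ψ v‖ ≤ C * ‖v‖ := by
    rintro ⟨-, ξ, rfl⟩
    rw [hψT ξ]
    exact hC ξ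
  set ψc : LinearMap.range T →L[ℝ] ℝ := ψ.mkContinuous C hψbound with hψcdef
  obtain ⟨F, hFext, -⟩ := exists_extension_norm_eq (LinearMap.range T) ψc
  refine ⟨F, fun ξ => ⟨hmem ξ, ?_⟩⟩
  have hv : (⟨fun n => z n ξ, hmem ξ⟩ : lp (fun _ : ℕ => ℝ) ∞) = T ξ := rfl
  rw [hv, ← hψT ξ]
  have := hFext ⟨T ξ, LinearMap.mem_range_self T ξ⟩
  rw [this]
  rfl
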